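/- arXiv:math-ph/0507053 — 2 statements merged into one kernel-verified Lean document; each statement's English description precedes it below -/
import Mathlib

section
/- Hyperbolic Cauchy–Goursat theorem (rectangle form): let U ⊆ ℝ² be an open set containing the closed rectangle [a,b] × [c,d], and let u, v : ℝ² → ℝ be continuously differentiable on U and satisfy the hyperbolic Cauchy–Riemann equations ∂u/∂x = ∂v/∂y and ∂u/∂y = ∂v/∂x on U. Then the contour integral of f(z) dz around the positively oriented boundary of the rectangle vanishes; explicitly, both (∫_a^b u(x,c) dx + ∫_c^d v(b,y) dy − ∫_a^b u(x,d) dx − ∫_c^d v(a,y) dy) = 0 and (∫_a^b v(x,c) dx + ∫_c^d u(b,y) dy − ∫_a^b v(x,d) dx − ∫_c^d u(a,y) dy) = 0. -/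
open MeasureTheory intervalIntegral

/-- Partial derivative with respect to the first variable: `∂u/∂x (p) = (Du)(p)(1,0)`. -/
noncomputable def pdx (u : ℝ × ℝ → ℝ) (p : ℝ × ℝ) : ℝ := fderiv ℝ u p (1, 0)

/-- Partial derivative with respect to the second variable: `∂u/∂y (p) = (Du)(p)(0,1)`. -/
noncomputable def pdy (u : ℝ × ℝ → ℝ) (p : ℝ × ℝ) : ℝ := fderiv ℝ u p (0, 1)

/-- Green's theorem for a rectangle with divergence-free field `(f, g)`. -/
lemma green_zero (U : Set (ℝ × ℝ)) (hU : IsOpen U)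
    (a b c d : ℝ) (hab : a ≤ b) (hcd : c ≤ d)
    (hrect : Set.Icc a b ×ˢ Set.Icc c d ⊆ U)
    (f g : ℝ × ℝ → ℝ) (hf : ContDiffOn ℝ 1 f U) (hg : ContDiffOn ℝ 1 g U)
    (hdiv : ∀ p ∈ U, pdx f p + pdy g p = 0) :
    (((∫ x in a..b, g (x, d)) - ∫ x in a..b, g (x, c)) + (∫ y in c..d, f (b, y)))
      - (∫ y in c..d, f (a, y)) = 0 := by
  have hI : Set.uIcc a b ×ˢ Set.uIcc c d = Set.Icc a b ×ˢ Set.Icc c d := by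
    rw [Set.uIcc_of_le hab, Set.uIcc_of_le hcd]
  have hIU : Set.uIcc a b ×ˢ Set.uIcc c d ⊆ U := hI ▸ hrect
  have hfd : ∀ p ∈ U, HasFDerivAt f (fderiv ℝ f p) p := fun p hp =>
    (((hf.differentiableOn one_ne_zero) p hp).differentiableAt (hU.mem_nhds hp)).hasFDerivAt
  have hgd : ∀ p ∈ U, HasFDerivAt g (fderiv ℝ g p) p := fun p hp =>
    (((hg.differentiableOn one_ne_zero) p hp).differentiableAt (hU.mem_nhds hp)).hasFDerivAt
  have hsub : Set.Ioo (min a b) (max a b) ×ˢ Set.Ioo (min c d) (max c d) \ (∅ : Set (ℝ × ℝ))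
      ⊆ U := by
    rw [Set.diff_empty, min_eq_left hab, max_eq_right hab, min_eq_left hcd, max_eq_right hcd]
    exact fun p hp => hrect ⟨Set.Ioo_subset_Icc_self hp.1, Set.Ioo_subset_Icc_self hp.2⟩
  have key := integral2_divergence_prod_of_hasFDerivAt_off_countable
    f g (fun p => fderiv ℝ f p) (fun p => fderiv ℝ g p) a c b d ∅ Set.countable_empty
    (hf.continuousOn.mono hIU) (hg.continuousOn.mono hIU)
    (fun p hp => hfd p (hsub hp)) (fun p hp => hgd p (hsub hp)) ?_
  · rw [← key]
    have h0 : ∀ x ∈ Set.uIcc a b, (∫ y in c..d,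
        fderiv ℝ f (x, y) (1, 0) + fderiv ℝ g (x, y) (0, 1)) = (fun _ : ℝ => (0:ℝ)) x := by
      intro x hx
      refine (intervalIntegral.integral_congr (g := fun _ => (0:ℝ)) fun y hy => ?_).trans
        intervalIntegral.integral_zero
      exact hdiv (x, y) (hIU ⟨hx, hy⟩)
    exact (intervalIntegral.integral_congr h0).trans intervalIntegral.integral_zero
  · rw [hI]
    refine (MeasureTheory.integrableOn_congr_fun (g := fun _ => (0 : ℝ)) ?_
      (measurableSet_Icc.prod measurableSet_Icc)).mpr (integrableOn_zero)
    exact fun p hp => hdiv p (hrect hp)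

/-- Hyperbolic Cauchy–Goursat theorem (rectangle form): if `u, v` are continuously
differentiable on an open set `U` containing the closed rectangle `[a,b] × [c,d]` and
satisfy the hyperbolic Cauchy–Riemann equations `∂u/∂x = ∂v/∂y`, `∂u/∂y = ∂v/∂x` on `U`,
then the contour integral `∮ f(z) dz = ∮ (u dx + v dy) + i ∮ (v dx + u dy)` around the
positively oriented boundary of the rectangle vanishes (both its real and imaginary
parts are zero). -/
theorem hyperbolic_cauchy_goursat_rectangle (U : Set (ℝ × ℝ)) (hU : IsOpen U)
    (a b c d : ℝ) (hab : a ≤ b) (hcd : c ≤ d)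
    (hrect : Set.Icc a b ×ˢ Set.Icc c d ⊆ U)
    (u v : ℝ × ℝ → ℝ) (hu : ContDiffOn ℝ 1 u U) (hv : ContDiffOn ℝ 1 v U)
    (hCR₁ : ∀ p ∈ U, pdx u p = pdy v p) (hCR₂ : ∀ p ∈ U, pdy u p = pdx v p) :
    ((∫ x in a..b, u (x, c)) + (∫ y in c..d, v (b, y))
      - (∫ x in a..b, u (x, d)) - (∫ y in c..d, v (a, y)) = 0) ∧
    ((∫ x in a..b, v (x, c)) + (∫ y in c..d, u (b, y))
      - (∫ x in a..b, v (x, d)) - (∫ y in c..d, u (a, y)) = 0) := by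
  have negpdy : ∀ (w : ℝ × ℝ → ℝ) (p : ℝ × ℝ), pdy (fun q => -w q) p = -pdy w p := by
    intro w p
    simp [pdy, fderiv_neg]
  have h1 := green_zero U hU a b c d hab hcd hrect v (fun q => -u q) hv hu.neg
    (fun p hp => by rw [negpdy]; have := hCR₂ p hp; simp [pdx, pdy] at this ⊢; linarith)
  have h2 := green_zero U hU a b c d hab hcd hrect u (fun q => -v q) hu hv.neg
    (fun p hp => by rw [negpdy]; have := hCR₁ p hp; simp [pdx, pdy] at this ⊢; linarith)
  simp only [intervalIntegral.integral_neg] at h1 h2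
  constructor <;> linarith
end

section
/- Stereographic coordinates do not define a hyperbolic structure on the sphere: the transition function F(Z) = α(X,Y) + i β(X,Y) with α(X,Y) = X/(X² + Y²) and β(X,Y) = −Y/(X² + Y²) is not hyperbolic analytic; precisely, for every (X, Y) ∈ ℝ² with X ≠ 0 and Y ≠ 0 one has ∂α/∂Y (X,Y) = −2XY/(X² + Y²)² and ∂β/∂X (X,Y) = 2XY/(X² + Y²)², so ∂α/∂Y (X,Y) ≠ ∂β/∂X (X,Y), and the second hyperbolic Cauchy–Riemann equation fails at (X, Y). -/
/-- The south-pole stereographic transition function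
`F(Z) = α(X,Y) + i β(X,Y)`, `α = X/(X²+Y²)`, `β = −Y/(X²+Y²)`, is not hyperbolic
analytic: for every `(X, Y)` with `X ≠ 0` and `Y ≠ 0` one has
`∂α/∂Y = −2XY/(X²+Y²)²` and `∂β/∂X = 2XY/(X²+Y²)²`, so `∂α/∂Y ≠ ∂β/∂X` and the second
hyperbolic Cauchy–Riemann equation fails there; hence stereographic coordinates do not
define a hyperbolic structure on the sphere. -/
theorem stereographic_transition_not_hyperbolic_analytic (X Y : ℝ) (hX : X ≠ 0) (hY : Y ≠ 0) :
    pdy (fun p : ℝ × ℝ => p.1 / (p.1 ^ 2 + p.2 ^ 2)) (X, Y)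
        = -2 * X * Y / (X ^ 2 + Y ^ 2) ^ 2 ∧
    pdx (fun p : ℝ × ℝ => -p.2 / (p.1 ^ 2 + p.2 ^ 2)) (X, Y)
        = 2 * X * Y / (X ^ 2 + Y ^ 2) ^ 2 ∧
    pdy (fun p : ℝ × ℝ => p.1 / (p.1 ^ 2 + p.2 ^ 2)) (X, Y)
        ≠ pdx (fun p : ℝ × ℝ => -p.2 / (p.1 ^ 2 + p.2 ^ 2)) (X, Y) := by
  have hs : X ^ 2 + Y ^ 2 ≠ 0 := by positivity
  have hdenD : DifferentiableAt ℝ (fun p : ℝ × ℝ => p.1 ^ 2 + p.2 ^ 2) (X, Y) :=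
    (differentiableAt_fst.pow 2).add (differentiableAt_snd.pow 2)
  have huD : DifferentiableAt ℝ (fun p : ℝ × ℝ => p.1 / (p.1 ^ 2 + p.2 ^ 2)) (X, Y) := by
    have e : (fun p : ℝ × ℝ => p.1 / (p.1 ^ 2 + p.2 ^ 2))
        = fun p : ℝ × ℝ => p.1 * (p.1 ^ 2 + p.2 ^ 2)⁻¹ := by
      funext p; rw [div_eq_mul_inv]
    rw [e]; exact differentiableAt_fst.mul (hdenD.inv hs)
  have hvD : DifferentiableAt ℝ (fun p : ℝ × ℝ => -p.2 / (p.1 ^ 2 + p.2 ^ 2)) (X, Y) := by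
    have e : (fun p : ℝ × ℝ => -p.2 / (p.1 ^ 2 + p.2 ^ 2))
        = fun p : ℝ × ℝ => -p.2 * (p.1 ^ 2 + p.2 ^ 2)⁻¹ := by
      funext p; rw [div_eq_mul_inv]
    rw [e]; exact differentiableAt_snd.neg.mul (hdenD.inv hs)
  have h1 : pdy (fun p : ℝ × ℝ => p.1 / (p.1 ^ 2 + p.2 ^ 2)) (X, Y)
      = -2 * X * Y / (X ^ 2 + Y ^ 2) ^ 2 := by
    rw [pdy, ← huD.lineDeriv_eq_fderiv, lineDeriv]
    have heq : (fun t : ℝ => (fun p : ℝ × ℝ => p.1 / (p.1 ^ 2 + p.2 ^ 2))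
        ((X, Y) + t • (0, 1))) = fun t : ℝ => X / (X ^ 2 + (Y + t) ^ 2) := by
      funext t
      simp [Prod.smul_mk]
    rw [heq]
    have hd : HasDerivAt (fun t : ℝ => X ^ 2 + (Y + t) ^ 2) (2 * (Y + 0)) 0 := by
      have h0 : HasDerivAt (fun t : ℝ => Y + t) 1 0 := by
        simpa using (hasDerivAt_id (0:ℝ)).const_add Y
      simpa using ((h0.pow 2).const_add (X ^ 2))
    have hnum : HasDerivAt (fun _ : ℝ => X) 0 0 := hasDerivAt_const 0 X
    have hs' : X ^ 2 + (Y + 0) ^ 2 ≠ 0 := by simpa using hs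
    have := (show HasDerivAt (fun t : ℝ => X / (X ^ 2 + (Y + t) ^ 2)) _ 0 from hnum.div hd hs').deriv
    rw [this]
    field_simp
    ring
  have h2 : pdx (fun p : ℝ × ℝ => -p.2 / (p.1 ^ 2 + p.2 ^ 2)) (X, Y)
      = 2 * X * Y / (X ^ 2 + Y ^ 2) ^ 2 := by
    rw [pdx, ← hvD.lineDeriv_eq_fderiv, lineDeriv]
    have heq : (fun t : ℝ => (fun p : ℝ × ℝ => -p.2 / (p.1 ^ 2 + p.2 ^ 2))
        ((X, Y) + t • (1, 0))) = fun t : ℝ => -Y / ((X + t) ^ 2 + Y ^ 2) := by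
      funext t
      simp [Prod.smul_mk]
    rw [heq]
    have hd : HasDerivAt (fun t : ℝ => (X + t) ^ 2 + Y ^ 2) (2 * (X + 0)) 0 := by
      have h0 : HasDerivAt (fun t : ℝ => X + t) 1 0 := by
        simpa using (hasDerivAt_id (0:ℝ)).const_add X
      simpa using ((h0.pow 2).add_const (Y ^ 2))
    have hnum : HasDerivAt (fun _ : ℝ => -Y) 0 0 := hasDerivAt_const 0 (-Y)
    have hs' : (X + 0) ^ 2 + Y ^ 2 ≠ 0 := by simpa using hs
    have := (show HasDerivAt (fun t : ℝ => -Y / ((X + t) ^ 2 + Y ^ 2)) _ 0 from hnum.div hd hs').deriv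
    rw [this]
    field_simp
    ring
  refine ⟨h1, h2, ?_⟩
  rw [h1, h2]
  intro h
  have hss : ((X ^ 2 + Y ^ 2) ^ 2 : ℝ) ≠ 0 := by positivity
  rw [div_eq_div_iff hss hss] at h
  have h4 : (4 : ℝ) * (X * Y) * ((X ^ 2 + Y ^ 2) ^ 2) = 0 := by nlinarith [h]
  exact mul_ne_zero (mul_ne_zero four_ne_zero (mul_ne_zero hX hY)) hss h4
end
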